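/- Let h_n and p_n satisfy n·h_n = ∑_{r=1}^{n} p_r·h_{n-r} with h_0 = 1. Then n!·h_n equals the determinant of the n×n matrix with entries p_1, -1, 0,...,0 in the first row; p_2, p_1, -2, 0,...,0 in the second row; and generally row i having entries p_i, p_{i-1}, ..., p_1 followed by zeros, except that the superdiagonal entry in row i is -i (for i < n); the last row is p_n, p_{n-1}, ..., p_1. -/
import Mathlib

private lemma brioschi_prod_fin_factorial (m : ℕ) :
    (∏ i : Fin m, ((i : ℕ) + 1)) = m.factorial := by
  induction m with
  | zero => simp
  | succ k ih =>
    rw [Fin.prod_univ_castSucc]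
    simp [ih, Nat.factorial_succ, Fin.val_last, Fin.coe_castSucc, mul_comm]

open Matrix in

/-- Brioschi's determinant solution of the Newton-type recursion: if `h 0 = 1` and
`n·h(n) = ∑_{r=1}^n p(r)·h(n-r)` for all `n ≥ 1`, then `n!·h(n)` is the determinant of the
`n×n` matrix with (1-indexed) entries `M_{i,j} = p_{i-j+1}` for `j ≤ i`, `M_{i,i+1} = -i`,
and `0` otherwise. -/
theorem brioschi_determinant (h p : ℕ → ℚ) (h0 : h 0 = 1)
    (hrec : ∀ n : ℕ, 1 ≤ n → (n : ℚ) * h n = ∑ r ∈ Finset.Icc 1 n, p r * h (n - r))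
    (n : ℕ) :
    (n.factorial : ℚ) * h n =
      Matrix.det (Matrix.of fun i j : Fin n =>
        if (j : ℕ) ≤ (i : ℕ) then p ((i : ℕ) - (j : ℕ) + 1)
        else if (j : ℕ) = (i : ℕ) + 1 then -((i : ℕ) + 1 : ℚ)
        else 0) := by
  obtain _ | m := n
  · simp [h0]
  set M : Matrix (Fin (m + 1)) (Fin (m + 1)) ℚ := Matrix.of fun i j : Fin (m + 1) =>
    if (j : ℕ) ≤ (i : ℕ) then p ((i : ℕ) - (j : ℕ) + 1)
    else if (j : ℕ) = (i : ℕ) + 1 then -((i : ℕ) + 1 : ℚ)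
    else 0 with hM
  set x : Fin (m + 1) → ℚ := fun j => h (j : ℕ) with hx
  -- the key row-sum identity, valid for each row i
  have hrow : ∀ i : Fin (m + 1),
      (∑ j ∈ Finset.univ.filter (fun j : Fin (m + 1) => (j : ℕ) ≤ (i : ℕ)),
        p ((i : ℕ) - (j : ℕ) + 1) * h (j : ℕ)) = ((i : ℕ) + 1 : ℚ) * h ((i : ℕ) + 1) := by
    intro i
    have := hrec ((i : ℕ) + 1) (Nat.le_add_left 1 _)
    push_cast at this
    rw [this]
    -- reindex: r = i + 1 - j
    refine Finset.sum_nbij' (i := fun j : Fin (m + 1) => (i : ℕ) + 1 - (j : ℕ))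
      (j := fun r : ℕ => (⟨(i : ℕ) - (r - 1), lt_of_le_of_lt (Nat.sub_le _ _) i.isLt⟩ : Fin (m + 1)))
      ?_ ?_ ?_ ?_ ?_
    · intro j hj
      simp only [Finset.mem_filter] at hj
      simp only [Finset.mem_Icc]
      omega
    · intro r hr
      simp only [Finset.mem_Icc] at hr
      simp only [Finset.mem_filter, Finset.mem_univ, true_and]
      exact Nat.sub_le _ _
    · intro j hj
      simp only [Finset.mem_filter] at hj
      apply Fin.ext
      show (i : ℕ) - (((i : ℕ) + 1 - (j : ℕ)) - 1) = (j : ℕ)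
      omega
    · intro r hr
      simp only [Finset.mem_Icc] at hr
      show (i : ℕ) + 1 - ((i : ℕ) - (r - 1)) = r
      omega
    · intro j hj
      simp only [Finset.mem_filter] at hj
      show p ((i : ℕ) - (j : ℕ) + 1) * h (j : ℕ)
        = p ((i : ℕ) + 1 - (j : ℕ)) * h ((i : ℕ) + 1 - ((i : ℕ) + 1 - (j : ℕ)))
      congr 2 <;> omega
  -- M *ᵥ x = (n h n) • e_last
  have hmv : M *ᵥ x = (((m : ℚ) + 1) * h (m + 1)) • (Pi.single (Fin.last m) 1 : Fin (m+1) → ℚ) := by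
    funext i
    simp only [Matrix.mulVec, dotProduct, hM, hx, Matrix.of_apply]
    have split : (∑ j : Fin (m + 1),
        (if (j : ℕ) ≤ (i : ℕ) then p ((i : ℕ) - (j : ℕ) + 1)
          else if (j : ℕ) = (i : ℕ) + 1 then -((i : ℕ) + 1 : ℚ) else 0) * h (j : ℕ))
        = (∑ j ∈ Finset.univ.filter (fun j : Fin (m + 1) => (j : ℕ) ≤ (i : ℕ)),
            p ((i : ℕ) - (j : ℕ) + 1) * h (j : ℕ))
          + ∑ j ∈ Finset.univ.filter (fun j : Fin (m + 1) => ¬ (j : ℕ) ≤ (i : ℕ)),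
            (if (j : ℕ) = (i : ℕ) + 1 then -((i : ℕ) + 1 : ℚ) else 0) * h (j : ℕ) := by
      rw [← Finset.sum_filter_add_sum_filter_not Finset.univ (fun j : Fin (m + 1) => (j : ℕ) ≤ (i : ℕ))]
      congr 1
      · exact Finset.sum_congr rfl (fun j hj => by
          simp only [Finset.mem_filter] at hj; rw [if_pos hj.2])
      · exact Finset.sum_congr rfl (fun j hj => by
          simp only [Finset.mem_filter] at hj; rw [if_neg hj.2])
    rw [split, hrow i]
    rcases eq_or_ne i (Fin.last m) with rfl | hi
    · have : ∀ j ∈ Finset.univ.filter (fun j : Fin (m + 1) => ¬ (j : ℕ) ≤ ((Fin.last m : Fin (m+1)) : ℕ)),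
          (if (j : ℕ) = ((Fin.last m : Fin (m+1)) : ℕ) + 1 then -(((Fin.last m : Fin (m+1)) : ℕ) + 1 : ℚ) else 0) * h (j : ℕ) = 0 := by
        intro j hj
        simp only [Finset.mem_filter, Fin.val_last] at hj
        have := j.isLt
        rw [if_neg (by omega), zero_mul]
      rw [Finset.sum_eq_zero this]
      simp [Fin.val_last]
    · have hilt : (i : ℕ) < m := by
        have := i.isLt
        rcases Nat.lt_or_ge (i : ℕ) m with hlt | hge
        · exact hlt
        · exact absurd (Fin.ext (by omega : (i : ℕ) = m)) hi
      have hset : Finset.univ.filter (fun j : Fin (m + 1) => ¬ (j : ℕ) ≤ (i : ℕ)) =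
          Finset.univ.filter (fun j : Fin (m + 1) => (j : ℕ) = (i : ℕ) + 1) ∪
          Finset.univ.filter (fun j : Fin (m + 1) => (i : ℕ) + 1 < (j : ℕ)) := by
        ext j
        simp only [Finset.mem_filter, Finset.mem_union, Finset.mem_univ, true_and]
        omega
      have hsingle : Finset.univ.filter (fun j : Fin (m + 1) => (j : ℕ) = (i : ℕ) + 1) =
          {(⟨(i : ℕ) + 1, by omega⟩ : Fin (m + 1))} := by
        ext j
        simp only [Finset.mem_filter, Finset.mem_univ, true_and, Finset.mem_singleton]
        constructor
        · intro hj; exact Fin.ext hj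
        · intro hj; rw [hj]
      rw [hset, Finset.sum_union (Finset.disjoint_filter.mpr (fun j _ hj1 hj2 => by omega))]
      rw [hsingle, Finset.sum_singleton]
      rw [Finset.sum_eq_zero (fun j hj => by
        simp only [Finset.mem_filter] at hj
        rw [if_neg (by omega), zero_mul])]
      simp only [if_pos rfl]
      rw [Pi.smul_apply, Pi.single_apply, if_neg hi, smul_zero]
      push_cast
      ring
  -- apply adjugate
  have key : M.det • x = (((m : ℚ) + 1) * h (m + 1)) • (M.adjugate *ᵥ Pi.single (Fin.last m) 1) := by
    calc M.det • x = (M.det • (1 : Matrix (Fin (m+1)) (Fin (m+1)) ℚ)) *ᵥ x := by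
          rw [Matrix.smul_mulVec, Matrix.one_mulVec]
      _ = (M.adjugate * M) *ᵥ x := by rw [Matrix.adjugate_mul]
      _ = M.adjugate *ᵥ (M *ᵥ x) := by rw [Matrix.mulVec_mulVec]
      _ = _ := by rw [hmv, Matrix.mulVec_smul]
  have key0 := congrFun key 0
  simp only [Pi.smul_apply, hx, smul_eq_mul, Fin.val_zero, h0, mul_one] at key0
  -- compute the cofactor
  have hadj : (M.adjugate *ᵥ Pi.single (Fin.last m) 1) 0 =
      (M.updateRow (Fin.last m) (Pi.single 0 1)).det := by
    simp only [Matrix.mulVec, dotProduct]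
    rw [Finset.sum_eq_single (Fin.last m)]
    · rw [Pi.single_eq_same, mul_one, Matrix.adjugate_apply]
    · intro b _ hb
      rw [Pi.single_eq_of_ne hb, mul_zero]
    · intro habs; exact absurd (Finset.mem_univ _) habs
  -- evaluate that determinant: expand along the last row
  have hdet : (M.updateRow (Fin.last m) (Pi.single (0 : Fin (m+1)) (1:ℚ))).det = (m.factorial : ℚ) := by
    rw [Matrix.det_succ_row _ (Fin.last m)]
    rw [Finset.sum_eq_single 0]
    · rw [Matrix.updateRow_self, Pi.single_eq_same, mul_one]
      have hsub : ((M.updateRow (Fin.last m) (Pi.single (0 : Fin (m+1)) (1:ℚ))).submatrix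
          (Fin.last m).succAbove (0 : Fin (m+1)).succAbove) =
          Matrix.of (fun i j : Fin m =>
            if (j : ℕ) + 1 ≤ (i : ℕ) then p ((i : ℕ) - (j : ℕ))
            else if (j : ℕ) = (i : ℕ) then -((i : ℕ) + 1 : ℚ) else 0) := by
        funext i j
        simp only [Matrix.submatrix_apply, Fin.succAbove_last, Fin.succAbove_zero,
          Matrix.of_apply]
        rw [Matrix.updateRow_ne (by
          intro habs
          exact absurd (congrArg Fin.val habs) (by simp [Fin.val_last]; omega))]
        simp only [hM, Matrix.of_apply, Fin.coe_castSucc, Fin.val_succ]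
        rcases Nat.lt_or_ge (j : ℕ) (i : ℕ) with hlt | hge
        · rw [if_pos (by omega), if_pos (by omega)]
          congr 1
          omega
        · rcases eq_or_ne (j : ℕ) (i : ℕ) with heq | hne
          · rw [if_neg (by omega), if_pos (by omega), if_neg (by omega), if_pos heq]
          · rw [if_neg (by omega), if_neg (by omega), if_neg (by omega), if_neg hne]
      rw [hsub]
      rw [Matrix.det_of_lowerTriangular _ (by
        intro i j hij
        simp only [OrderDual.toDual_lt_toDual] at hij
        simp only [Matrix.of_apply]
        rw [if_neg (by omega), if_neg (by omega)] : Matrix.BlockTriangular _ OrderDual.toDual)]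
      have : ∀ i : Fin m, (Matrix.of (fun i j : Fin m =>
            if (j : ℕ) + 1 ≤ (i : ℕ) then p ((i : ℕ) - (j : ℕ))
            else if (j : ℕ) = (i : ℕ) then -((i : ℕ) + 1 : ℚ) else 0)) i i
          = -((i : ℕ) + 1 : ℚ) := by
        intro i
        simp only [Matrix.of_apply]
        simp
      rw [Finset.prod_congr rfl (fun i _ => this i)]
      rw [show (fun i : Fin m => -((i : ℕ) + 1 : ℚ)) = fun i : Fin m => (-1 : ℚ) * ((i : ℕ) + 1)
        from funext fun i => by ring]
      rw [Finset.prod_mul_distrib, Finset.prod_const]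
      have hfact : (∏ i : Fin m, ((i : ℕ) + 1 : ℚ)) = (m.factorial : ℚ) := by
        rw [← brioschi_prod_fin_factorial m]
        push_cast
        rfl
      rw [hfact, Fin.val_last, Fin.val_zero, Finset.card_univ, Fintype.card_fin]
      rw [Nat.add_zero, mul_left_comm, ← mul_assoc, ← pow_add, ← two_mul, pow_mul]
      norm_num
    · intro b _ hb
      rw [Matrix.updateRow_self, Pi.single_eq_of_ne hb, mul_zero, zero_mul]
    · intro habs; exact absurd (Finset.mem_univ _) habs
  rw [hadj, hdet] at key0
  rw [key0]
  push_cast [Nat.factorial_succ]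
  ring
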